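/- Let Ũ = ṼṼᵀ, with Ṽ ∈ ℝ^{D×r} whose blocks satisfy Ṽ_i ∈ O_{d_i,r}, be a solution of the rank-constrained problem. Suppose there exist c ∈ ℝ and symmetric matrices T⁽¹⁾, T⁽²⁾ ∈ ℝ^{D×D} with T⁽²⁾ block diagonal such that S = T⁽¹⁾ + T⁽²⁾ + c·I_D, T⁽¹⁾Ṽ = 0, Ṽ_iṼ_iᵀ T⁽²⁾_ii Ṽ_iṼ_iᵀ = T⁽²⁾_ii for all i, every matrix Ṽ_iᵀ T⁽²⁾_ii Ṽ_i is positive definite, and xᵀT⁽¹⁾x < 0 for every nonzero x ∈ ℝ^D with Ṽᵀx = 0. Then Ũ is the unique solution of the SDP relaxation: tr(SU) < tr(SŨ) for every SDP-feasible U ≠ Ũ. -/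

import Mathlib

open Matrix BigOperators MeasureTheory ProbabilityTheory

noncomputable section

/-- The index type of a `D × D` block matrix with blocks of sizes `d 0, …, d (m-1)`. -/
abbrev Idx {m : ℕ} (d : Fin m → ℕ) := (i : Fin m) × Fin (d i)

/-- The `(i,j)` block of a `D × D` matrix. -/
def blk {m : ℕ} {d : Fin m → ℕ} (S : Matrix (Idx d) (Idx d) ℝ) (i j : Fin m) :
    Matrix (Fin (d i)) (Fin (d j)) ℝ :=
  Matrix.of fun a b => S ⟨i, a⟩ ⟨j, b⟩

/-- The `i`-th `d i × r` block of a `D × r` matrix. -/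
def rblk {m r : ℕ} {d : Fin m → ℕ} (V : Matrix (Idx d) (Fin r) ℝ) (i : Fin m) :
    Matrix (Fin (d i)) (Fin r) ℝ :=
  Matrix.of fun a c => V ⟨i, a⟩ c

/-- Stacking matrices `O i ∈ ℝ^{d i × r}` into a `D × r` matrix. -/
def stack {m r : ℕ} {d : Fin m → ℕ} (O : ∀ i, Matrix (Fin (d i)) (Fin r) ℝ) :
    Matrix (Idx d) (Fin r) ℝ :=
  Matrix.of fun p c => O p.1 p.2 c

/-- Semi-orthogonality: `Oᵀ O = I`. -/
def SemiOrth {n r : ℕ} (O : Matrix (Fin n) (Fin r) ℝ) : Prop := Oᵀ * O = 1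

/-- Frobenius norm of a real matrix. -/
def frobNorm {α β : Type*} [Fintype α] [Fintype β] (A : Matrix α β ℝ) : ℝ :=
  Real.sqrt (∑ a, ∑ b, (A a b) ^ 2)

/-- Spectral (ℓ₂ operator) norm of a real matrix. -/
def specNorm {α β : Type*} [Fintype α] [Fintype β] [DecidableEq β] (A : Matrix α β ℝ) : ℝ :=
  ‖LinearMap.toContinuousLinearMap (Matrix.toEuclideanLin A)‖

/-- The OTSM objective `∑ i j, tr(Oᵢᵀ S_{ij} O_j)`. -/
def objVal {m r : ℕ} {d : Fin m → ℕ} (S : Matrix (Idx d) (Idx d) ℝ)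
    (O : ∀ i, Matrix (Fin (d i)) (Fin r) ℝ) : ℝ :=
  ∑ i, ∑ j, Matrix.trace ((O i)ᵀ * blk S i j * O j)

/-- Feasibility for the SDP relaxation. -/
def SDPFeasible {m : ℕ} {d : Fin m → ℕ} (r : ℕ) (U : Matrix (Idx d) (Idx d) ℝ) : Prop :=
  U.PosSemidef ∧ (∀ i, ((1 : Matrix (Fin (d i)) (Fin (d i)) ℝ) - blk U i i).PosSemidef) ∧
    ∀ i, Matrix.trace (blk U i i) = (r : ℝ)

/-- `U` solves the SDP relaxation. -/
def IsSDPSol {m : ℕ} {d : Fin m → ℕ} (r : ℕ) (S U : Matrix (Idx d) (Idx d) ℝ) : Prop :=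
  SDPFeasible r U ∧ ∀ U', SDPFeasible r U' → Matrix.trace (S * U') ≤ Matrix.trace (S * U)

/-- Feasibility for the rank-constrained problem. -/
def RankFeasible {m : ℕ} {d : Fin m → ℕ} (r : ℕ) (U : Matrix (Idx d) (Idx d) ℝ) : Prop :=
  SDPFeasible r U ∧ U.rank = r

/-- `U` solves the rank-constrained problem. -/
def IsRankSol {m : ℕ} {d : Fin m → ℕ} (r : ℕ) (S U : Matrix (Idx d) (Idx d) ℝ) : Prop :=
  RankFeasible r U ∧ ∀ U', RankFeasible r U' → Matrix.trace (S * U') ≤ Matrix.trace (S * U)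

/-- The MAXBET model: `S_{ij} = Θ_i Θ_jᵀ + W_{ij}` with `W` symmetric. -/
def MAXBET {m r : ℕ} {d : Fin m → ℕ} (S W : Matrix (Idx d) (Idx d) ℝ)
    (Θ : ∀ i, Matrix (Fin (d i)) (Fin r) ℝ) : Prop :=
  W.IsSymm ∧ ∀ i j, blk S i j = Θ i * (Θ j)ᵀ + blk W i j

/-- The MAXDIFF model: `S_{ii} = 0`, `S_{ij} = Θ_i Θ_jᵀ + W_{ij}` for `i ≠ j`,
`W` symmetric with `W_{ii} = 0`. -/
def MAXDIFF {m r : ℕ} {d : Fin m → ℕ} (S W : Matrix (Idx d) (Idx d) ℝ)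
    (Θ : ∀ i, Matrix (Fin (d i)) (Fin r) ℝ) : Prop :=
  W.IsSymm ∧ (∀ i, blk W i i = 0) ∧ (∀ i, blk S i i = 0) ∧
    ∀ i j, i ≠ j → blk S i j = Θ i * (Θ j)ᵀ + blk W i j

/-- The Lagrange multiplier `Λ_i = O_iᵀ (∑ j, S_{ij} O_j)`. -/
def lagrange {m r : ℕ} {d : Fin m → ℕ} (S : Matrix (Idx d) (Idx d) ℝ)
    (O : ∀ i, Matrix (Fin (d i)) (Fin r) ℝ) (i : Fin m) : Matrix (Fin r) (Fin r) ℝ :=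
  (O i)ᵀ * ∑ j, blk S i j * O j

/-- `(O_1, …, O_m)` is a critical point of the OTSM problem. -/
def IsCritical {m r : ℕ} {d : Fin m → ℕ} (S : Matrix (Idx d) (Idx d) ℝ)
    (O : ∀ i, Matrix (Fin (d i)) (Fin r) ℝ) : Prop :=
  (∀ i, SemiOrth (O i)) ∧
    ∀ i, (lagrange S O i).IsSymm ∧ O i * lagrange S O i = ∑ j, blk S i j * O j

/-- `(O_1, …, O_m)` is a candidate critical point of the OTSM problem. -/
def IsCandidate {m r : ℕ} {d : Fin m → ℕ} (S : Matrix (Idx d) (Idx d) ℝ)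
    (O : ∀ i, Matrix (Fin (d i)) (Fin r) ℝ) : Prop :=
  IsCritical S O ∧ ∀ i, (lagrange S O i).PosSemidef

/-- Assumption 1: `tr(Θᵀ S Θ) ≤ tr(Oᵀ S O)`. -/
def Assumption1 {m r : ℕ} {d : Fin m → ℕ} (S : Matrix (Idx d) (Idx d) ℝ)
    (Θ O : ∀ i, Matrix (Fin (d i)) (Fin r) ℝ) : Prop :=
  Matrix.trace ((stack Θ)ᵀ * S * stack Θ) ≤ Matrix.trace ((stack O)ᵀ * S * stack O)

/-- `Θ`-discordance of a noise matrix `W`. -/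
def Discordant {m r : ℕ} {d : Fin m → ℕ} (Θ : ∀ i, Matrix (Fin (d i)) (Fin r) ℝ)
    (W : Matrix (Idx d) (Idx d) ℝ) : Prop :=
  W.IsSymm ∧ specNorm W ≤ 3 * Real.sqrt (∑ i, (d i : ℝ)) ∧
    ∀ i, frobNorm (rblk (W * stack Θ) i) ≤
      3 * Real.sqrt ((∑ i, (d i : ℝ)) * r * Real.log m)

/-- The deterministic noise condition (3.1) of Theorem 3.1. -/
def DetCond31 {m r : ℕ} {d : Fin m → ℕ} (Θ : ∀ i, Matrix (Fin (d i)) (Fin r) ℝ)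
    (W : Matrix (Idx d) (Idx d) ℝ) : Prop :=
  specNorm W * (4 * Real.sqrt r + 1) + 1 < (m : ℝ) ∧
  4 * m * ((⨆ i, frobNorm (rblk (W * stack Θ) i)) + 4 * specNorm W ^ 2 * Real.sqrt ((r : ℝ) / m)) /
        ((m : ℝ) - specNorm W * (4 * Real.sqrt r + 1) - 1) +
      2 * ((⨆ i, frobNorm (rblk (W * stack Θ) i)) + 4 * specNorm W ^ 2 * Real.sqrt ((r : ℝ) / m)) +
      8 * specNorm W * Real.sqrt ((r : ℝ) / m) + 2 * specNorm W < (m : ℝ)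

/-- The deterministic noise condition (3.4) of Theorem 3.2. -/
def DetCond32 {m r : ℕ} {d : Fin m → ℕ} (Θ : ∀ i, Matrix (Fin (d i)) (Fin r) ℝ)
    (W : Matrix (Idx d) (Idx d) ℝ) : Prop :=
  4 * specNorm W * Real.sqrt r < (m : ℝ) ∧
  specNorm W * (4 * Real.sqrt r + 1) +
      ((⨆ i, frobNorm (rblk (W * stack Θ) i)) + 4 * specNorm W ^ 2 * Real.sqrt ((r : ℝ) / m)) +
      2 * m * ((⨆ i, frobNorm (rblk (W * stack Θ) i)) + 4 * specNorm W ^ 2 * Real.sqrt ((r : ℝ) / m)) /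
        ((m : ℝ) - 4 * specNorm W * Real.sqrt r) +
      16 * specNorm W ^ 2 * (r : ℝ) / m ≤ (m : ℝ)

/-- The "upper triangular" order on block indices. -/
def upTri {m : ℕ} {d : Fin m → ℕ} (a b : Idx d) : Prop :=
  a.1 < b.1 ∨ (a.1 = b.1 ∧ (a.2 : ℕ) ≤ (b.2 : ℕ))

section PSDtrace
variable {α β : Type*} [Fintype α] [Fintype β]

lemma trace_transpose_mul_self_nonneg (C : Matrix α β ℝ) : 0 ≤ Matrix.trace (Cᵀ * C) := by
  refine Finset.sum_nonneg fun b _ => ?_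
  simp only [Matrix.diag_apply, Matrix.mul_apply, Matrix.transpose_apply]
  exact Finset.sum_nonneg fun a _ => mul_self_nonneg _

lemma eq_zero_of_trace_transpose_mul_self {C : Matrix α β ℝ}
    (h : Matrix.trace (Cᵀ * C) = 0) : C = 0 := by
  ext a b
  have h2 : ∑ b : β, ∑ a : α, C a b * C a b = 0 := by
    rw [← h]; rfl
  have h3 := (Finset.sum_eq_zero_iff_of_nonneg
    (fun b _ => Finset.sum_nonneg fun a _ => mul_self_nonneg (C a b))).mp h2 b (Finset.mem_univ b)
  have h4 := (Finset.sum_eq_zero_iff_of_nonneg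
    (fun a _ => mul_self_nonneg (C a b))).mp h3 a (Finset.mem_univ a)
  simpa using mul_self_eq_zero.mp h4

variable {n : Type*} [Fintype n] [DecidableEq n]

open scoped MatrixOrder in
theorem psd_exists_sqrt_aux {A : Matrix n n ℝ} (hA : A.PosSemidef) :
    ∃ X : Matrix n n ℝ, X.PosSemidef ∧ X * X = A :=
  ⟨CFC.sqrt A, (Matrix.nonneg_iff_posSemidef.mp (CFC.sqrt_nonneg A)),
    CFC.sqrt_mul_sqrt_self A (Matrix.nonneg_iff_posSemidef.mpr hA)⟩

def Matrix.PosSemidef.sqrt {A : Matrix n n ℝ} (hA : A.PosSemidef) : Matrix n n ℝ :=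
  Classical.choose (psd_exists_sqrt_aux hA)

theorem Matrix.PosSemidef.posSemidef_sqrt {A : Matrix n n ℝ} (hA : A.PosSemidef) :
    hA.sqrt.PosSemidef :=
  (Classical.choose_spec (psd_exists_sqrt_aux hA)).1

theorem Matrix.PosSemidef.sqrt_mul_self {A : Matrix n n ℝ} (hA : A.PosSemidef) :
    hA.sqrt * hA.sqrt = A :=
  (Classical.choose_spec (psd_exists_sqrt_aux hA)).2

lemma psd_trace_eq {A B : Matrix n n ℝ} (hA : A.PosSemidef) (hB : B.PosSemidef) :
    Matrix.trace (A * B) = Matrix.trace ((hA.sqrt * hB.sqrt)ᵀ * (hA.sqrt * hB.sqrt)) := by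
  have hAs : hA.sqrt * hA.sqrt = A := hA.sqrt_mul_self
  have hBs : hB.sqrt * hB.sqrt = B := hB.sqrt_mul_self
  have hAh : hA.sqrtᵀ = hA.sqrt := by
    rw [← Matrix.conjTranspose_eq_transpose_of_trivial]; exact hA.posSemidef_sqrt.isHermitian
  have hBh : hB.sqrtᵀ = hB.sqrt := by
    rw [← Matrix.conjTranspose_eq_transpose_of_trivial]; exact hB.posSemidef_sqrt.isHermitian
  rw [Matrix.transpose_mul, hAh, hBh]
  rw [Matrix.mul_assoc, ← Matrix.mul_assoc hA.sqrt hA.sqrt, hAs,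
    Matrix.trace_mul_comm hB.sqrt, Matrix.mul_assoc, hBs]

lemma psd_trace_nonneg {A B : Matrix n n ℝ} (hA : A.PosSemidef) (hB : B.PosSemidef) :
    0 ≤ Matrix.trace (A * B) := by
  rw [psd_trace_eq hA hB]; exact trace_transpose_mul_self_nonneg _

lemma psd_mul_eq_zero_of_trace {A B : Matrix n n ℝ} (hA : A.PosSemidef) (hB : B.PosSemidef)
    (h : Matrix.trace (A * B) = 0) : A * B = 0 := by
  have hC : hA.sqrt * hB.sqrt = 0 :=
    eq_zero_of_trace_transpose_mul_self ((psd_trace_eq hA hB).symm.trans h ▸ rfl)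
  calc A * B = hA.sqrt * (hA.sqrt * hB.sqrt) * hB.sqrt := by
        rw [← Matrix.mul_assoc, Matrix.mul_assoc _ _ hB.sqrt, Matrix.mul_assoc,
          hB.sqrt_mul_self, ← Matrix.mul_assoc, hA.sqrt_mul_self]
    _ = 0 := by rw [hC, Matrix.mul_zero, Matrix.zero_mul]

end PSDtrace

section BlkLemmas
variable {m r : ℕ} {d : Fin m → ℕ}

lemma sum_idx (f : Idx d → ℝ) : ∑ p : Idx d, f p = ∑ i, ∑ a, f ⟨i, a⟩ := by
  rw [← Finset.univ_sigma_univ, Finset.sum_sigma]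

lemma trace_eq_sum_blk (A : Matrix (Idx d) (Idx d) ℝ) :
    Matrix.trace A = ∑ i, Matrix.trace (blk A i i) := by
  rw [Matrix.trace, ← Finset.univ_sigma_univ, Finset.sum_sigma]; rfl

lemma trace_mul_eq_sum_blk (A B : Matrix (Idx d) (Idx d) ℝ) :
    Matrix.trace (A * B) = ∑ i, ∑ j, Matrix.trace (blk A i j * blk B j i) := by
  have : Matrix.trace (A * B) = ∑ p : Idx d, ∑ q : Idx d, A p q * B q p := by
    simp [Matrix.trace, Matrix.mul_apply]
  rw [this, sum_idx]
  refine Finset.sum_congr rfl fun i _ => ?_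
  rw [Finset.sum_comm, sum_idx (fun q => ∑ a, A ⟨i,a⟩ q * B q ⟨i,a⟩)]
  refine Finset.sum_congr rfl fun j _ => ?_
  simp only [Matrix.trace, Matrix.diag_apply, Matrix.mul_apply, blk, Matrix.of_apply]
  exact Finset.sum_comm

lemma blk_mul_mul (V : Matrix (Idx d) (Fin r) ℝ) (M : Matrix (Fin r) (Fin r) ℝ) (i j : Fin m) :
    blk (V * M * Vᵀ) i j = rblk V i * M * (rblk V j)ᵀ := by
  ext a b
  simp [blk, rblk, Matrix.mul_apply]

lemma blk_mul_transpose (V : Matrix (Idx d) (Fin r) ℝ) (i j : Fin m) :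
    blk (V * Vᵀ) i j = rblk V i * (rblk V j)ᵀ := by
  ext a b
  simp [blk, rblk, Matrix.mul_apply]

lemma blk_smul (a : ℝ) (X : Matrix (Idx d) (Idx d) ℝ) (i j : Fin m) :
    blk (a • X) i j = a • blk X i j := rfl

lemma transpose_mul_self_eq (V : Matrix (Idx d) (Fin r) ℝ) (hV : ∀ i, SemiOrth (rblk V i)) :
    Vᵀ * V = (m : ℝ) • 1 := by
  ext c c'
  rw [Matrix.mul_apply]
  rw [sum_idx (fun p => Vᵀ c p * V p c')]
  have : ∀ i : Fin m, ∑ a, Vᵀ c ⟨i, a⟩ * V ⟨i, a⟩ c' = (1 : Matrix (Fin r) (Fin r) ℝ) c c' := by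
    intro i
    rw [← hV i]
    simp [SemiOrth, rblk, Matrix.mul_apply]
  rw [Finset.sum_congr rfl (fun i _ => this i)]
  simp [Finset.sum_const, Matrix.smul_apply, mul_comm]

end BlkLemmas

/-- Lemma 4.1: certificate condition for the equivalence between the
rank-constrained problem and its SDP relaxation. -/
theorem certificate_unique_sdp_solution {m r : ℕ} (hm : 0 < m) (hr : 0 < r)
    {d : Fin m → ℕ} (hd : ∀ i, r ≤ d i)
    (S : Matrix (Idx d) (Idx d) ℝ) (hSsymm : S.IsSymm)
    (V : Matrix (Idx d) (Fin r) ℝ) (hV : ∀ i, SemiOrth (rblk V i))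
    (hsol : IsRankSol r S (V * Vᵀ))
    (c : ℝ) (T1 T2 : Matrix (Idx d) (Idx d) ℝ)
    (hT1s : T1.IsSymm) (hT2s : T2.IsSymm)
    (hT2bd : ∀ i j, i ≠ j → blk T2 i j = 0)
    (hdecomp : S = T1 + T2 + c • 1)
    (hT1V : T1 * V = 0)
    (hproj : ∀ i, rblk V i * (rblk V i)ᵀ * blk T2 i i * (rblk V i * (rblk V i)ᵀ) = blk T2 i i)
    (hpd : ∀ i, ((rblk V i)ᵀ * blk T2 i i * rblk V i).PosDef)
    (hneg : ∀ x : Idx d → ℝ, x ≠ 0 → Vᵀ.mulVec x = 0 → x ⬝ᵥ T1.mulVec x < 0) :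
    ∀ U : Matrix (Idx d) (Idx d) ℝ, SDPFeasible r U → U ≠ V * Vᵀ →
      Matrix.trace (S * U) < Matrix.trace (S * (V * Vᵀ)) := by
  intro U hU hne
  classical
  have hm' : (m : ℝ) ≠ 0 := Nat.cast_ne_zero.mpr hm.ne'
  have hVV : Vᵀ * V = (m : ℝ) • 1 := transpose_mul_self_eq V hV
  have hVsemi : ∀ i, (rblk V i)ᵀ * rblk V i = 1 := fun i => hV i
  have hT2blk : ∀ i, blk T2 i i =
      rblk V i * ((rblk V i)ᵀ * blk T2 i i * rblk V i) * (rblk V i)ᵀ := by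
    intro i
    conv_lhs => rw [← hproj i]
    simp only [Matrix.mul_assoc]
  -- trace of T2 * X blockwise
  have hT2trace : ∀ X : Matrix (Idx d) (Idx d) ℝ,
      Matrix.trace (T2 * X) = ∑ i, Matrix.trace (((rblk V i)ᵀ * blk T2 i i * rblk V i) *
        ((rblk V i)ᵀ * blk X i i * rblk V i)) := by
    intro X
    rw [trace_mul_eq_sum_blk]
    refine Finset.sum_congr rfl fun i _ => ?_
    rw [Finset.sum_eq_single_of_mem i (Finset.mem_univ i) (fun j _ hj => by
      rw [hT2bd i j (Ne.symm hj), Matrix.zero_mul, Matrix.trace_zero])]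
    calc Matrix.trace (blk T2 i i * blk X i i)
        = Matrix.trace (rblk V i * (((rblk V i)ᵀ * blk T2 i i * rblk V i) *
            ((rblk V i)ᵀ * blk X i i))) := by
          conv_lhs => rw [hT2blk i]
          simp only [Matrix.mul_assoc]
      _ = Matrix.trace ((((rblk V i)ᵀ * blk T2 i i * rblk V i) *
            ((rblk V i)ᵀ * blk X i i)) * rblk V i) := Matrix.trace_mul_comm _ _
      _ = Matrix.trace (((rblk V i)ᵀ * blk T2 i i * rblk V i) *
            ((rblk V i)ᵀ * blk X i i * rblk V i)) := by simp only [Matrix.mul_assoc]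
  -- trace of a feasible point
  have htrX : ∀ X : Matrix (Idx d) (Idx d) ℝ, SDPFeasible r X →
      Matrix.trace X = (m : ℝ) * r := by
    intro X hX
    rw [trace_eq_sum_blk, Finset.sum_congr rfl (fun i _ => hX.2.2 i)]
    simp [Finset.sum_const, mul_comm]
  -- decomposition of the objective
  have hStrace : ∀ X : Matrix (Idx d) (Idx d) ℝ, SDPFeasible r X →
      Matrix.trace (S * X) = Matrix.trace (T1 * X)
        + (∑ i, Matrix.trace (((rblk V i)ᵀ * blk T2 i i * rblk V i) *
            ((rblk V i)ᵀ * blk X i i * rblk V i)))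
        + c * ((m : ℝ) * r) := by
    intro X hX
    rw [hdecomp, Matrix.add_mul, Matrix.add_mul, Matrix.trace_add, Matrix.trace_add,
      Matrix.smul_mul, Matrix.one_mul, Matrix.trace_smul, hT2trace, htrX X hX,
      smul_eq_mul]
  have hUtfeas : SDPFeasible r (V * Vᵀ) := hsol.1.1
  -- blocks of V * Vᵀ conjugated
  have hUtblk : ∀ i, (rblk V i)ᵀ * blk (V * Vᵀ) i i * rblk V i = 1 := by
    intro i
    rw [blk_mul_transpose]
    rw [show (rblk V i)ᵀ * (rblk V i * (rblk V i)ᵀ) * rblk V i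
        = ((rblk V i)ᵀ * rblk V i) * ((rblk V i)ᵀ * rblk V i) by
      simp only [Matrix.mul_assoc], hVsemi i, Matrix.one_mul]
  have hT1Ut : Matrix.trace (T1 * (V * Vᵀ)) = 0 := by
    rw [← Matrix.mul_assoc, hT1V, Matrix.zero_mul, Matrix.trace_zero]
  have hSUt : Matrix.trace (S * (V * Vᵀ))
      = (∑ i, Matrix.trace ((rblk V i)ᵀ * blk T2 i i * rblk V i)) + c * ((m : ℝ) * r) := by
    rw [hStrace _ hUtfeas, hT1Ut, zero_add]
    congr 1
    exact Finset.sum_congr rfl fun i _ => by rw [hUtblk i, Matrix.mul_one]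
  -- quadratic form of T1 is nonpositive
  have hy0 : ∀ x : Idx d → ℝ, Vᵀ *ᵥ (x - (m : ℝ)⁻¹ • ((V * Vᵀ) *ᵥ x)) = 0 := by
    intro x
    rw [Matrix.mulVec_sub, Matrix.mulVec_smul, Matrix.mulVec_mulVec, ← Matrix.mul_assoc,
      hVV, Matrix.smul_mul, Matrix.one_mul, Matrix.smul_mulVec, smul_smul,
      inv_mul_cancel₀ hm', one_smul, sub_self]
  have hyT1 : ∀ x : Idx d → ℝ, T1 *ᵥ (x - (m : ℝ)⁻¹ • ((V * Vᵀ) *ᵥ x)) = T1 *ᵥ x := by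
    intro x
    rw [Matrix.mulVec_sub, Matrix.mulVec_smul, Matrix.mulVec_mulVec, ← Matrix.mul_assoc,
      hT1V, Matrix.zero_mul, Matrix.zero_mulVec, smul_zero, sub_zero]
  have hquadle : ∀ x : Idx d → ℝ, x ⬝ᵥ T1 *ᵥ x ≤ 0 := by
    intro x
    have hq : x ⬝ᵥ T1 *ᵥ x
        = (x - (m : ℝ)⁻¹ • ((V * Vᵀ) *ᵥ x)) ⬝ᵥ T1 *ᵥ (x - (m : ℝ)⁻¹ • ((V * Vᵀ) *ᵥ x)) := by
      conv_lhs => rw [← hyT1 x]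
      rw [Matrix.dotProduct_mulVec, ← Matrix.mulVec_transpose, hT1s.eq, ← hyT1 x,
        dotProduct_comm]
    rw [hq]
    rcases eq_or_ne (x - (m : ℝ)⁻¹ • ((V * Vᵀ) *ᵥ x)) 0 with h | h
    · rw [h]; simp
    · exact le_of_lt (hneg _ h (hy0 x))
  have hnegT1 : (-T1).PosSemidef := by
    refine Matrix.PosSemidef.of_dotProduct_mulVec_nonneg ?_ ?_
    · show (-T1)ᴴ = -T1
      rw [Matrix.conjTranspose_eq_transpose_of_trivial, Matrix.transpose_neg, hT1s.eq]
    · intro x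
      have h1 := hquadle x
      have hs : star x = x := by ext p; exact star_trivial _
      rw [hs, Matrix.neg_mulVec, dotProduct_neg]
      linarith
  -- kernel of T1 is the range of V
  have hker : ∀ x : Idx d → ℝ, T1 *ᵥ x = 0 → x = (m : ℝ)⁻¹ • ((V * Vᵀ) *ᵥ x) := by
    intro x hx
    by_contra hxx
    have hy : x - (m : ℝ)⁻¹ • ((V * Vᵀ) *ᵥ x) ≠ 0 := fun h => hxx (sub_eq_zero.mp h)
    have h2 := hneg _ hy (hy0 x)
    rw [hyT1 x, hx] at h2
    simp at h2
  have hcol : T1 * U = 0 → U = (m : ℝ)⁻¹ • ((V * Vᵀ) * U) := by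
    intro h
    ext p q
    have hc : T1 *ᵥ (fun p' => U p' q) = 0 := by
      ext p'
      have h3 := congrFun (congrFun h p') q
      simpa [Matrix.mul_apply, Matrix.mulVec, dotProduct] using h3
    have h2 := congrFun (hker _ hc) p
    simp only [Pi.smul_apply, smul_eq_mul] at h2
    rw [Matrix.smul_apply, smul_eq_mul, h2]
    congr 1
  have hUsym : Uᵀ = U := by
    rw [← Matrix.conjTranspose_eq_transpose_of_trivial]; exact hU.1.1
  -- per-block inequalities
  have hpsd1B : ∀ i, ((1 : Matrix (Fin r) (Fin r) ℝ)
      - (rblk V i)ᵀ * blk U i i * rblk V i).PosSemidef := by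
    intro i
    have h1 : (1 : Matrix (Fin r) (Fin r) ℝ) - (rblk V i)ᵀ * blk U i i * rblk V i
        = (rblk V i)ᵀ * ((1 : Matrix (Fin (d i)) (Fin (d i)) ℝ) - blk U i i) * rblk V i := by
      rw [Matrix.mul_sub, Matrix.mul_one, Matrix.sub_mul, hVsemi i]
    rw [h1]
    have h2 := (hU.2.1 i).conjTranspose_mul_mul_same (rblk V i)
    rwa [Matrix.conjTranspose_eq_transpose_of_trivial] at h2
  have hgap : ∀ i,
      Matrix.trace ((rblk V i)ᵀ * blk T2 i i * rblk V i)
        - Matrix.trace (((rblk V i)ᵀ * blk T2 i i * rblk V i) *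
            ((rblk V i)ᵀ * blk U i i * rblk V i))
      = Matrix.trace (((rblk V i)ᵀ * blk T2 i i * rblk V i) *
          ((1 : Matrix (Fin r) (Fin r) ℝ) - (rblk V i)ᵀ * blk U i i * rblk V i)) := by
    intro i
    rw [Matrix.mul_sub, Matrix.mul_one, Matrix.trace_sub]
  have hile : ∀ i ∈ Finset.univ, Matrix.trace (((rblk V i)ᵀ * blk T2 i i * rblk V i) *
        ((rblk V i)ᵀ * blk U i i * rblk V i))
      ≤ Matrix.trace ((rblk V i)ᵀ * blk T2 i i * rblk V i) := by
    intro i _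
    have h1 := psd_trace_nonneg (hpd i).posSemidef (hpsd1B i)
    linarith [hgap i]
  have hSU := hStrace U hU
  have ht1le : Matrix.trace (T1 * U) ≤ 0 := by
    have h0 := psd_trace_nonneg hnegT1 hU.1
    rw [Matrix.neg_mul, Matrix.trace_neg] at h0
    linarith
  -- suppose the inequality fails
  by_contra hcon
  push_neg at hcon
  have hsumle := Finset.sum_le_sum hile
  have hle : Matrix.trace (S * U) ≤ Matrix.trace (S * (V * Vᵀ)) := by
    rw [hSU, hSUt]; linarith
  have heq := le_antisymm hle hcon
  rw [hSU, hSUt] at heq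
  have ht10 : Matrix.trace (T1 * U) = 0 := by linarith
  have hsumeq : ∑ i, Matrix.trace (((rblk V i)ᵀ * blk T2 i i * rblk V i) *
        ((rblk V i)ᵀ * blk U i i * rblk V i))
      = ∑ i, Matrix.trace ((rblk V i)ᵀ * blk T2 i i * rblk V i) := by linarith
  have hieq := (Finset.sum_eq_sum_iff_of_le hile).mp hsumeq
  -- T1 * U = 0
  have hT1U : T1 * U = 0 := by
    have h0 : Matrix.trace ((-T1) * U) = 0 := by
      rw [Matrix.neg_mul, Matrix.trace_neg, ht10, neg_zero]
    have h1 := psd_mul_eq_zero_of_trace hnegT1 hU.1 h0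
    rw [Matrix.neg_mul, neg_eq_zero] at h1
    exact h1
  -- each conjugated block equals the identity
  have hB1 : ∀ i, (rblk V i)ᵀ * blk U i i * rblk V i = 1 := by
    intro i
    have h0 : Matrix.trace (((rblk V i)ᵀ * blk T2 i i * rblk V i) *
        ((1 : Matrix (Fin r) (Fin r) ℝ) - (rblk V i)ᵀ * blk U i i * rblk V i)) = 0 := by
      have := hieq i (Finset.mem_univ i); linarith [hgap i]
    have h1 := psd_mul_eq_zero_of_trace (hpd i).posSemidef (hpsd1B i) h0
    have hdet : IsUnit ((rblk V i)ᵀ * blk T2 i i * rblk V i).det := (hpd i).det_pos.ne'.isUnit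
    have h2 : (1 : Matrix (Fin r) (Fin r) ℝ) - (rblk V i)ᵀ * blk U i i * rblk V i
        = ((rblk V i)ᵀ * blk T2 i i * rblk V i)⁻¹ *
          (((rblk V i)ᵀ * blk T2 i i * rblk V i) *
            ((1 : Matrix (Fin r) (Fin r) ℝ) - (rblk V i)ᵀ * blk U i i * rblk V i)) := by
      rw [← Matrix.mul_assoc, Matrix.nonsing_inv_mul _ hdet, Matrix.one_mul]
    rw [h1, Matrix.mul_zero] at h2
    exact (sub_eq_zero.mp h2).symm
  -- reconstruct U
  have hU1 : U = (m : ℝ)⁻¹ • ((V * Vᵀ) * U) := hcol hT1U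
  have hU2 : U = (m : ℝ)⁻¹ • (U * (V * Vᵀ)) := by
    have h3 := congrArg Matrix.transpose hU1
    simp only [Matrix.transpose_smul, Matrix.transpose_mul, Matrix.transpose_transpose,
      hUsym] at h3
    exact h3
  have hM : U = ((m : ℝ)⁻¹ * (m : ℝ)⁻¹) • (V * (Vᵀ * U * V) * Vᵀ) := by
    conv_lhs => rw [hU2, hU1]
    rw [Matrix.smul_mul, smul_smul]
    congr 1
    simp only [Matrix.mul_assoc]
  have hfin : (1 : Matrix (Fin r) (Fin r) ℝ)
      = ((m : ℝ)⁻¹ * (m : ℝ)⁻¹) • (Vᵀ * U * V) := by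
    have h4 := hB1 ⟨0, hm⟩
    have hblkU : blk U ⟨0, hm⟩ ⟨0, hm⟩ = ((m : ℝ)⁻¹ * (m : ℝ)⁻¹) •
        (rblk V ⟨0, hm⟩ * (Vᵀ * U * V) * (rblk V ⟨0, hm⟩)ᵀ) := by
      conv_lhs => rw [hM]
      rw [blk_smul, blk_mul_mul]
    rw [hblkU, Matrix.mul_smul, Matrix.smul_mul] at h4
    rw [← h4]
    congr 1
    rw [show (rblk V ⟨0, hm⟩)ᵀ * (rblk V ⟨0, hm⟩ * (Vᵀ * U * V) * (rblk V ⟨0, hm⟩)ᵀ) *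
          rblk V ⟨0, hm⟩
        = ((rblk V ⟨0, hm⟩)ᵀ * rblk V ⟨0, hm⟩) * (Vᵀ * U * V) *
          ((rblk V ⟨0, hm⟩)ᵀ * rblk V ⟨0, hm⟩) by simp only [Matrix.mul_assoc],
      hVsemi ⟨0, hm⟩, Matrix.one_mul, Matrix.mul_one]
  refine hne ?_
  calc U = ((m : ℝ)⁻¹ * (m : ℝ)⁻¹) • (V * (Vᵀ * U * V) * Vᵀ) := hM
    _ = V * (((m : ℝ)⁻¹ * (m : ℝ)⁻¹) • (Vᵀ * U * V)) * Vᵀ := by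
        rw [Matrix.mul_smul, Matrix.smul_mul]
    _ = V * (1 : Matrix (Fin r) (Fin r) ℝ) * Vᵀ := by rw [← hfin]
    _ = V * Vᵀ := by rw [Matrix.mul_one]
end
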